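/- Suppose that for every probability vector c on S, the mixture density z ↦ ∑_{x∈S} c(x)·f(x)(z) is NOT ν-almost everywhere equal to f₀. Then for every integer k ≥ 1 and every probability vector p on S^k, the trajectory-mixture density (z₁,…,z_k) ↦ ∑_{(x_1,…,x_k)∈S^k} p(x_1,…,x_k)·∏_{i=1}^{k} f(x_i)(z_i) is NOT ν^k-almost everywhere equal to (z₁,…,z_k) ↦ ∏_{i=1}^{k} f₀(z_i), where ν^k denotes the k-fold product measure on 𝒵^k. -/

import Mathlib

open MeasureTheory

theorem trajectory_mixture_not_ae_eq {𝒵 : Type*} [MeasurableSpace 𝒵]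
    (ν : Measure 𝒵) [SigmaFinite ν]
    {S : Type*} [Fintype S] [Nonempty S]
    (f : S → 𝒵 → ℝ) (hfmeas : ∀ x, Measurable (f x)) (hfnonneg : ∀ x z, 0 ≤ f x z)
    (hfint : ∀ x, ∫ z, f x z ∂ν = 1)
    (f₀ : 𝒵 → ℝ) (hf₀meas : Measurable f₀) (hf₀nonneg : ∀ z, 0 ≤ f₀ z)
    (hf₀int : ∫ z, f₀ z ∂ν = 1)
    (hmix : ∀ c : S → ℝ, (∀ x, 0 ≤ c x) → ∑ x : S, c x = 1 →
      ¬ ((fun z => ∑ x : S, c x * f x z) =ᵐ[ν] f₀)) :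
    ∀ k : ℕ, 1 ≤ k → ∀ p : (Fin k → S) → ℝ, (∀ t, 0 ≤ p t) → ∑ t, p t = 1 →
      ¬ ((fun z : Fin k → 𝒵 => ∑ t : Fin k → S, p t * ∏ i, f (t i) (z i))
          =ᵐ[Measure.pi fun _ : Fin k => ν] fun z => ∏ i, f₀ (z i)) := by
  classical
  letI : MeasureSpace 𝒵 := ⟨ν⟩
  rintro k hk p hpnn hpsum h
  obtain ⟨n, rfl⟩ : ∃ n, k = n + 1 := ⟨k - 1, (Nat.succ_pred_eq_of_pos hk).symm⟩
  have hint : ∀ x, Integrable (f x) ν := by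
    intro x
    by_contra hnot
    simpa [integral_undef hnot] using hfint x
  have hint₀ : Integrable f₀ ν := by
    by_contra hnot
    simpa [integral_undef hnot] using hf₀int
  have hfint' : ∀ x, ∫ z, f x z = 1 := hfint
  have hf₀int' : ∫ z, f₀ z = 1 := hf₀int
  set c : S → ℝ := fun x => ∑ t : Fin (n + 1) → S, if t 0 = x then p t else 0 with hc
  have hcnn : ∀ x, 0 ≤ c x := fun x =>
    Finset.sum_nonneg fun t _ => by split <;> [exact hpnn t; exact le_rfl]
  have hcsum : ∑ x, c x = 1 := by
    rw [hc, Finset.sum_comm]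
    simpa [Finset.sum_ite_eq] using hpsum
  set e := MeasurableEquiv.piFinSuccAbove (fun _ : Fin (n + 1) => 𝒵) 0 with he
  have mp := (measurePreserving_piFinSuccAbove (fun _ : Fin (n + 1) => ν) 0).symm
  have h2 := mp.quasiMeasurePreserving.ae_eq_comp h
  have h3 := Measure.ae_ae_of_ae_prod h2
  have hrw : ∀ (F : Fin (n + 1) → 𝒵 → ℝ) (a : 𝒵) (y : Fin n → 𝒵),
      (∏ i, F i ((Fin.cons a y : Fin (n + 1) → 𝒵) i)) = F 0 a * ∏ j : Fin n, F j.succ (y j) := by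
    intro F a y
    rw [Fin.prod_univ_succ]
    simp
  have key : (fun a => ∑ x, c x * f x a) =ᵐ[ν] f₀ := by
    filter_upwards [h3] with a ha
    have ha' : ∀ᵐ y ∂(Measure.pi fun _ : Fin n => ν),
        (∑ t : Fin (n + 1) → S, p t * (f (t 0) a * ∏ j : Fin n, f (t j.succ) (y j)))
          = f₀ a * ∏ j : Fin n, f₀ (y j) := by
      filter_upwards [ha] with y hy
      simpa [Function.comp, hrw] using hy
    have hI := integral_congr_ae ha'
    have hvol : (Measure.pi fun _ : Fin n => ν) = (volume : Measure (Fin n → 𝒵)) :=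
      rfl
    have hL : (∫ y, ∑ t : Fin (n + 1) → S,
          p t * (f (t 0) a * ∏ j : Fin n, f (t j.succ) (y j))
          ∂(Measure.pi fun _ : Fin n => ν))
        = ∑ t : Fin (n + 1) → S, p t * f (t 0) a := by
      rw [hvol]
      rw [integral_finset_sum]
      · refine Finset.sum_congr rfl fun t _ => ?_
        rw [integral_const_mul, integral_const_mul]
        erw [integral_fintype_prod_eq_prod (ι := Fin n) (fun j => f (t j.succ))]
        simp [hfint']
      · intro t _
        exact ((Integrable.fintype_prod (f := fun j : Fin n => f (t j.succ))
          fun j => hint _).const_mul _).const_mul _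
    have hR : (∫ y, f₀ a * ∏ j : Fin n, f₀ (y j) ∂(Measure.pi fun _ : Fin n => ν))
        = f₀ a := by
      rw [hvol, integral_const_mul]
      erw [integral_fintype_prod_eq_prod (ι := Fin n) (fun _ => f₀)]
      simp [hf₀int']
    have hsum : ∑ t : Fin (n + 1) → S, p t * f (t 0) a = f₀ a :=
      hL.symm.trans (hI.trans hR)
    calc ∑ x, c x * f x a
        = ∑ x, ∑ t : Fin (n + 1) → S, if t 0 = x then p t * f x a else 0 := by
          refine Finset.sum_congr rfl fun x _ => ?_
          rw [hc, Finset.sum_mul]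
          exact Finset.sum_congr rfl fun t _ => by split <;> simp
      _ = ∑ t : Fin (n + 1) → S, p t * f (t 0) a := by
          rw [Finset.sum_comm]
          exact Finset.sum_congr rfl fun t _ => by simp [Finset.sum_ite_eq]
      _ = f₀ a := hsum
  exact hmix c hcnn hcsum key
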